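/- The prime factorization of the shadow refines the prime factorization of a directed graph: let G be a finite connected digraph without loops having at least two vertices, suppose G ≅ ∏_{i∈Fin k} G_i where each G_i is a prime digraph, and suppose S(G) ≅ ∏_{j∈J} Z_j where J is a finite index set and each Z_j is a prime simple graph. Then there is a partition J = J_1 ∪ ⋯ ∪ J_k into pairwise disjoint sets such that S(G_i) ≅ ∏_{j∈J_i} Z_j for every i. -/

import Mathlib

universe u

namespace Digraph

/-- Cartesian product of two digraphs. -/
def boxProd {α β : Type*} (G : Digraph α) (H : Digraph β) : Digraph (α × β) where
  Adj p q := (G.Adj p.1 q.1 ∧ p.2 = q.2) ∨ (p.1 = q.1 ∧ H.Adj p.2 q.2)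

/-- Cartesian product of a family of digraphs. -/
def prodFam {I : Type*} {V : I → Type*} (G : ∀ i, Digraph (V i)) : Digraph (∀ i, V i) where
  Adj u v := ∃ κ, (G κ).Adj (u κ) (v κ) ∧ ∀ i, i ≠ κ → u i = v i

/-- The shadow of a digraph: distinct vertices are adjacent iff there is an arc between them
in some direction. -/
def shadow {α : Type*} (G : Digraph α) : SimpleGraph α where
  Adj a b := a ≠ b ∧ (G.Adj a b ∨ G.Adj b a)
  symm := by
    constructor
    rintro a b ⟨hab, h⟩
    exact ⟨hab.symm, h.symm⟩
  loopless := by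
    constructor
    rintro a ⟨ha, -⟩
    exact ha rfl

/-- A digraph is connected if its shadow is connected. -/
def Connected {α : Type*} (G : Digraph α) : Prop := G.shadow.Connected

/-- Isomorphisms of digraphs. -/
abbrev Iso {α β : Type*} (G : Digraph α) (H : Digraph β) := RelIso G.Adj H.Adj

/-- A digraph is prime w.r.t. the Cartesian product if it is nontrivial, connected, has an
unlooped vertex, and in every representation as a product of two digraphs one factor
has exactly one vertex. -/
def IsPrime {α : Type u} (G : Digraph α) : Prop :=
  G.Connected ∧ Nontrivial α ∧ (∃ v, ¬ G.Adj v v) ∧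
    ∀ {A B : Type u} (GA : Digraph A) (GB : Digraph B),
      Nonempty (G.Iso (GA.boxProd GB)) →
        (Nonempty A ∧ Subsingleton A) ∨ (Nonempty B ∧ Subsingleton B)

/-- The vertex set of the connected component of `a` in the shadow of the product. -/
def weakComponent {I : Type*} {V : I → Type*} (G : ∀ i, Digraph (V i)) (a : ∀ i, V i) :
    Set (∀ i, V i) :=
  {v | (prodFam G).shadow.Reachable a v}

/-- The weak Cartesian product: the induced subdigraph of the Cartesian product on the
connected component (in the shadow) of the vertex `a`. -/
def weakProd {I : Type*} {V : I → Type*} (G : ∀ i, Digraph (V i)) (a : ∀ i, V i) :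
    Digraph (weakComponent G a) where
  Adj u v := (prodFam G).Adj u.1 v.1

end Digraph

/-- A nontrivial connected loopless digraph is prime if in every representation as a
Cartesian product of two digraphs one factor has exactly one vertex. -/
def Digraph.IsPrimeLoopless {α : Type u} (G : Digraph α) : Prop :=
  G.Connected ∧ Nontrivial α ∧ (∀ v, ¬ G.Adj v v) ∧
    ∀ {A B : Type u} (GA : Digraph A) (GB : Digraph B),
      Nonempty (G.Iso (GA.boxProd GB)) →
        (Nonempty A ∧ Subsingleton A) ∨ (Nonempty B ∧ Subsingleton B)

/-- Box product of a family of simple graphs: two vertices are adjacent iff they differ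
in exactly one coordinate and are adjacent there. -/
def SimpleGraph.boxProdFam {I : Type*} {V : I → Type*} (Z : ∀ i, SimpleGraph (V i)) :
    SimpleGraph (∀ i, V i) where
  Adj u v := ∃ κ, (Z κ).Adj (u κ) (v κ) ∧ ∀ i, i ≠ κ → u i = v i
  symm := by
    constructor
    rintro u v ⟨κ, h, hh⟩
    exact ⟨κ, h.symm, fun i hi => (hh i hi).symm⟩
  loopless := by
    constructor
    rintro u ⟨κ, h, -⟩
    exact (Z κ).irrefl h

/-- A simple graph is prime w.r.t. the box product if it is connected, nontrivial and in
every representation as a box product of two simple graphs one factor has exactly one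
vertex. -/
def SimpleGraph.IsPrimeGraph {α : Type u} (Z : SimpleGraph α) : Prop :=
  Z.Connected ∧ Nontrivial α ∧
    ∀ {A B : Type u} (ZA : SimpleGraph A) (ZB : SimpleGraph B),
      Nonempty (Z ≃g ZA.boxProd ZB) →
        (Nonempty A ∧ Subsingleton A) ∨ (Nonempty B ∧ Subsingleton B)

set_option linter.dupNamespace false
set_option linter.unusedSectionVars false
namespace ShadowRefine

open SimpleGraph


variable {J : Type u} {X : J → Type u} {Z : ∀ j, SimpleGraph (X j)}

lemma boxProdFam_adj {u v : ∀ j, X j} :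
    (boxProdFam Z).Adj u v ↔ ∃ κ, (Z κ).Adj (u κ) (v κ) ∧ ∀ i, i ≠ κ → u i = v i := Iff.rfl

lemma coord_spec {u v : ∀ j, X j} (h : (boxProdFam Z).Adj u v) {j : J} (hj : u j ≠ v j) :
    (Z j).Adj (u j) (v j) ∧ ∀ i, i ≠ j → u i = v i := by
  obtain ⟨κ, hκ, he⟩ := h
  rcases eq_or_ne j κ with rfl | hne
  · exact ⟨hκ, he⟩
  · exact absurd (he j hne) hj

lemma adj_update [DecidableEq J] {u : ∀ j, X j} {j : J} {b : X j}
    (h : (Z j).Adj (u j) b) :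
    (boxProdFam Z).Adj u (Function.update u j b) :=
  ⟨j, by simpa using h, fun i hi => by simp [Function.update_of_ne hi]⟩

/-- Opposite edges of a 4-cycle with distinct diagonals change the same coordinate. -/
lemma square_opp {u1 u2 u3 u4 : ∀ j, X j}
    (h12 : (boxProdFam Z).Adj u1 u2) (h23 : (boxProdFam Z).Adj u2 u3)
    (h34 : (boxProdFam Z).Adj u3 u4) (h41 : (boxProdFam Z).Adj u4 u1)
    (h13 : u1 ≠ u3) (h24 : u2 ≠ u4) {j : J} (hj : u1 j ≠ u2 j) :
    u3 j ≠ u4 j := by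
  classical
  obtain ⟨κ1, a1, e1⟩ := h12
  obtain ⟨κ2, a2, e2⟩ := h23
  obtain ⟨κ3, a3, e3⟩ := h34
  obtain ⟨κ4, a4, e4⟩ := h41
  have hjκ1 : j = κ1 := by
    by_contra hne
    exact hj (e1 j hne)
  subst hjκ1
  by_cases hk : κ3 = j
  · subst hk; exact a3.ne
  exfalso
  by_cases h2 : κ2 = j <;> by_cases h4 : κ4 = j
  · -- κ2 = κ4 = j : coordinate κ3 changes exactly once
    have c1 : u1 κ3 = u2 κ3 := e1 κ3 hk
    have c2 : u2 κ3 = u3 κ3 := e2 κ3 (fun h => hk (h.trans h2))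
    have c4 : u4 κ3 = u1 κ3 := e4 κ3 (fun h => hk (h.trans h4))
    exact a3.ne (c2.symm.trans (c1.symm.trans c4.symm))
  · -- κ2 = j, κ4 ≠ j : u1 = u3
    apply h13
    funext i
    by_cases hi : i = j
    · subst hi
      have c3 : u3 i = u4 i := e3 i (fun h => hk h.symm)
      have c4 : u4 i = u1 i := e4 i (fun h => h4 h.symm)
      exact (c3.trans c4).symm
    · exact (e1 i hi).trans (e2 i (fun h => hi (h.trans h2)))
  · -- κ2 ≠ j, κ4 = j : subcases on κ2 = κ3
    by_cases h23' : κ2 = κ3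
    · -- u2 = u4
      apply h24
      funext i
      by_cases hi : i = κ2
      · subst hi
        have c4 : u4 i = u1 i := e4 i (fun h => h2 (h.trans h4))
        have c1 : u1 i = u2 i := e1 i h2
        exact (c4.trans c1).symm
      · exact (e2 i hi).trans (e3 i (fun h => hi (h.trans h23'.symm)))
    · -- coordinate κ2 changes exactly once
      have c1 : u1 κ2 = u2 κ2 := e1 κ2 h2
      have c3 : u3 κ2 = u4 κ2 := e3 κ2 h23'
      have c4 : u4 κ2 = u1 κ2 := e4 κ2 (fun h => h2 (h.trans h4))
      exact a2.ne (c1.symm.trans ((c3.trans c4).symm))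
  · -- κ2 ≠ j, κ4 ≠ j : coordinate j changes exactly once
    have c2 : u2 j = u3 j := e2 j (fun h => h2 h.symm)
    have c3 : u3 j = u4 j := e3 j (fun h => hk h.symm)
    have c4 : u4 j = u1 j := e4 j (fun h => h4 h.symm)
    exact a1.ne (((c2.trans c3).trans c4).symm)



/-- Opposite edges of a 4-cycle with distinct diagonals in a box product lie on
the same side. -/
lemma square_opp2 {A B : Type*} {GA : SimpleGraph A} {GB : SimpleGraph B}
    {p1 p2 p3 p4 : A × B}
    (h12 : (GA.boxProd GB).Adj p1 p2) (h23 : (GA.boxProd GB).Adj p2 p3)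
    (h34 : (GA.boxProd GB).Adj p3 p4) (h41 : (GA.boxProd GB).Adj p4 p1)
    (h13 : p1 ≠ p3) (h24 : p2 ≠ p4) (hA : p1.2 = p2.2) : p3.2 = p4.2 := by
  rw [boxProd_adj] at h12 h23 h34 h41
  by_contra hB
  -- the edge p3p4 is B-type
  have t3 : p3.1 = p4.1 := by
    rcases h34 with ⟨-, h⟩ | ⟨-, h⟩
    exacts [absurd h hB, h]
  -- the edge p1p2 is A-type
  have t1 : GA.Adj p1.1 p2.1 := by
    rcases h12 with ⟨h, -⟩ | ⟨h, he⟩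
    · exact h
    · exact absurd hA h.ne
  rcases h23 with ⟨-, b2⟩ | ⟨-, b2⟩ <;> rcases h41 with ⟨-, b4⟩ | ⟨-, b4⟩
  · -- t2 = A, t4 = A : snd around contradiction
    exact hB ((b2.symm.trans hA.symm).trans b4.symm)
  · -- t2 = A, t4 = B : p1 = p3
    exact h13 (Prod.ext (t3.trans b4).symm (hA.trans b2))
  · -- t2 = B, t4 = B or mixed
    exact h24 (Prod.ext (b2.trans t3) (hA.symm.trans b4.symm))
  · -- t2 = B, t4 = B : fst contradiction
    exact t1.ne ((b2.trans t3).trans b4).symm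


section Conn

variable {J : Type u} {X : J → Type u} {Z : ∀ j, SimpleGraph (X j)}
variable [DecidableEq J]

lemma reach_update (hZc : ∀ j, (Z j).Preconnected) (u : ∀ j, X j) (j : J) (b : X j) :
    (boxProdFam Z).Reachable u (Function.update u j b) := by
  have aux : ∀ {a c : X j} (w : (Z j).Walk a c) (u : ∀ j, X j), u j = a →
      (boxProdFam Z).Reachable u (Function.update u j c) := by
    intro a c w
    induction w with
    | nil => intro u hu; rw [← hu, Function.update_eq_self]
    | @cons a d c h p ih =>
      intro u hu
      have h1 : (boxProdFam Z).Adj u (Function.update u j d) :=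
        adj_update (by rw [hu]; exact h)
      have h2 := ih (Function.update u j d) (Function.update_self j d u)
      rw [Function.update_idem] at h2
      exact (h1.reachable).trans h2
  exact aux ((hZc j (u j) b).some) u rfl

lemma reach_of_eq_off (hZc : ∀ j, (Z j).Preconnected) :
    ∀ (D : Finset J) (u v : ∀ j, X j), (∀ j ∉ D, u j = v j) →
      (boxProdFam Z).Reachable u v := by
  intro D
  induction D using Finset.induction with
  | empty =>
    intro u v h
    have : u = v := funext fun j => h j (Finset.notMem_empty j)
    exact this ▸ Reachable.refl u
  | @insert j D hj ih =>
    intro u v h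
    have r1 : (boxProdFam Z).Reachable u (Function.update u j (v j)) :=
      reach_update hZc u j (v j)
    have r2 : (boxProdFam Z).Reachable (Function.update u j (v j)) v := by
      apply ih
      intro m hm
      rcases eq_or_ne m j with rfl | hne
      · simp
      · rw [Function.update_of_ne hne]
        exact h m (by simp [hm, hne])
    exact r1.trans r2

lemma boxProdFam_connected [Fintype J] (hZc : ∀ j, (Z j).Connected)
    (hne : ∀ j, Nonempty (X j)) : (boxProdFam Z).Connected := by
  have : Nonempty (∀ j, X j) := ⟨fun j => (hne j).some⟩
  rw [connected_iff]
  refine ⟨fun u v => ?_, this⟩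
  exact reach_of_eq_off (fun j => (hZc j).preconnected) Finset.univ u v
    (fun j hj => absurd (Finset.mem_univ j) hj)

end Conn

section Split

variable {J : Type u} {X : J → Type u} {Z : ∀ j, SimpleGraph (X j)} [DecidableEq J]
variable {A B : Type u} {GA : SimpleGraph A} {GB : SimpleGraph B}
variable (φ : boxProdFam Z ≃g GA.boxProd GB)

lemma side_or {u v : ∀ j, X j} (h : (boxProdFam Z).Adj u v) :
    (GA.Adj (φ u).1 (φ v).1 ∧ (φ u).2 = (φ v).2) ∨
      (GB.Adj (φ u).2 (φ v).2 ∧ (φ u).1 = (φ v).1) :=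
  boxProd_adj.mp (φ.map_rel_iff.mpr h)

lemma not_both {u v : ∀ j, X j} (h : (boxProdFam Z).Adj u v)
    (h1 : (φ u).1 = (φ v).1) : ¬ (φ u).2 = (φ v).2 := by
  intro h2
  exact h.ne (EquivLike.injective φ (Prod.ext h1 h2))

/-- Transporting a `j`-edge across an edge in another coordinate preserves the side. -/
lemma transport_step {u v w : ∀ j, X j} {j : J}
    (huv : (boxProdFam Z).Adj u v) (hj : u j ≠ v j)
    (huw : (boxProdFam Z).Adj u w) (hwj : w j = u j) :
    ∃ x, (boxProdFam Z).Adj w x ∧ w j ≠ x j ∧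
      ((φ u).2 = (φ v).2 ↔ (φ w).2 = (φ x).2) := by
  obtain ⟨hzj, heuv⟩ := coord_spec huv hj
  obtain ⟨κ2, a2, e2⟩ := id huw
  have hκ2j : κ2 ≠ j := by
    rintro rfl
    exact ((hwj ▸ a2).ne) rfl
  refine ⟨Function.update w j (v j), adj_update (by rw [hwj]; exact hzj), ?_, ?_⟩
  · rw [Function.update_self, hwj]; exact hj
  · -- the square u, v, x, w
    set x := Function.update w j (v j) with hx
    have hvx : (boxProdFam Z).Adj v x := by
      refine ⟨κ2, ?_, ?_⟩
      · have h1 : v κ2 = u κ2 := (heuv κ2 hκ2j).symm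
        have h2 : x κ2 = w κ2 := by rw [hx]; exact Function.update_of_ne hκ2j _ _
        rw [h1, h2]; exact a2
      · intro i hi
        rcases eq_or_ne i j with rfl | hij
        · rw [hx, Function.update_self]
        · rw [(heuv i hij).symm, e2 i hi, hx, Function.update_of_ne hij]
    have hux : u ≠ x := by
      intro hh
      apply a2.ne
      rw [hh, hx]
      exact Function.update_of_ne hκ2j _ _
    have hvw : v ≠ w := by
      intro hh
      exact hj (by rw [hh, hwj])
    have hwx : (boxProdFam Z).Adj w x := adj_update (by rw [hwj]; exact hzj)
    constructor
    · intro hs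
      have := square_opp2 (φ.map_rel_iff.mpr huv) (φ.map_rel_iff.mpr hvx)
        (φ.map_rel_iff.mpr hwx.symm) (φ.map_rel_iff.mpr huw.symm)
        (fun hh => hux (EquivLike.injective φ hh))
        (fun hh => hvw (EquivLike.injective φ hh)) hs
      exact this.symm
    · intro hs
      have := square_opp2 (φ.map_rel_iff.mpr hwx) (φ.map_rel_iff.mpr hvx.symm)
        (φ.map_rel_iff.mpr huv.symm) (φ.map_rel_iff.mpr huw)
        (fun hh => hvw.symm (EquivLike.injective φ hh))
        (fun hh => hux.symm (EquivLike.injective φ hh)) hs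
      exact this.symm

/-- Parallel transport of a `B`-side `j`-edge along a walk in `GA`. -/
lemma transportB {a a₁ : A} (W : GA.Walk a a₁) :
    ∀ {b b' : B} (y y' : ∀ j, X j) (j : J), (boxProdFam Z).Adj y y' → y j ≠ y' j →
      φ y = (a, b) → φ y' = (a, b') →
      ∃ w w', (boxProdFam Z).Adj w w' ∧ w j ≠ w' j ∧ φ w = (a₁, b) ∧ φ w' = (a₁, b') := by
  induction W with
  | nil => exact fun y y' j h hj h1 h2 => ⟨y, y', h, hj, h1, h2⟩
  | @cons a c a₁ hadj p ih =>
    intro b b' y y' j h hj h1 h2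
    have hbb' : GB.Adj b b' := by
      rcases side_or φ h with ⟨ha, -⟩ | ⟨hb, -⟩
      · rw [h1, h2] at ha
        exact absurd rfl ha.ne
      · rwa [h1, h2] at hb
    set y₁ := φ.symm (c, b) with hy₁
    set y₁' := φ.symm (c, b') with hy₁'
    have hφ1 : φ y₁ = (c, b) := φ.apply_symm_apply _
    have hφ1' : φ y₁' = (c, b') := φ.apply_symm_apply _
    have hadj1 : (boxProdFam Z).Adj y₁ y₁' := by
      apply φ.map_rel_iff.mp
      rw [hφ1, hφ1']
      exact Or.inr ⟨hbb', rfl⟩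
    have hcyc2 : (boxProdFam Z).Adj y' y₁' := by
      apply φ.map_rel_iff.mp
      rw [h2, hφ1']
      exact Or.inl ⟨hadj, rfl⟩
    have hcyc4 : (boxProdFam Z).Adj y₁ y := by
      apply φ.map_rel_iff.mp
      rw [h1, hφ1]
      exact Or.inl ⟨hadj.symm, rfl⟩
    have hd1 : y ≠ y₁' := by
      intro hh
      apply hadj.ne
      have := congrArg (fun t => (φ t).1) hh
      simpa [h1, hφ1'] using this
    have hd2 : y' ≠ y₁ := by
      intro hh
      apply hadj.ne
      have := congrArg (fun t => (φ t).1) hh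
      simpa [h2, hφ1] using this
    have hj1 : y₁ j ≠ y₁' j :=
      (square_opp h hcyc2 hadj1.symm hcyc4 hd1 hd2 hj).symm
    exact ih y₁ y₁' j hadj1 hj1 hφ1 hφ1'

lemma adj_upd_upd {u0 : ∀ j, X j} {j : J} {x y : X j} (h : (Z j).Adj x y) :
    (boxProdFam Z).Adj (Function.update u0 j x) (Function.update u0 j y) :=
  ⟨j, by simpa using h, fun i hi => by simp [Function.update_of_ne hi]⟩

lemma zadj_of_adj_upd {u0 : ∀ j, X j} {j : J} {x y : X j}
    (h : (boxProdFam Z).Adj (Function.update u0 j x) (Function.update u0 j y)) :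
    (Z j).Adj x y := by
  rcases eq_or_ne x y with rfl | hxy
  · exact absurd rfl h.ne
  · have := (coord_spec (j := j) h (by simpa using hxy)).1
    simpa using this

/-- Inside a layer, every mixed pair of coordinates is realized. -/
lemma layer_fill (hconnA : GA.Preconnected) (hZc : ∀ j, (Z j).Preconnected)
    (u0 : ∀ j, X j) (j : J) (x y : X j) :
    ∃ w : ∀ j, X j, (∀ m, m ≠ j → w m = u0 m) ∧
      φ w = ((φ (Function.update u0 j x)).1, (φ (Function.update u0 j y)).2) := by
  have aux : ∀ {z y' : X j} (_ : (Z j).Walk z y'),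
      (∃ w, (∀ m, m ≠ j → w m = u0 m) ∧
        φ w = ((φ (Function.update u0 j x)).1, (φ (Function.update u0 j z)).2)) →
      ∃ w, (∀ m, m ≠ j → w m = u0 m) ∧
        φ w = ((φ (Function.update u0 j x)).1, (φ (Function.update u0 j y')).2) := by
    intro z y' W
    induction W with
    | nil => exact id
    | @cons z c y' h p ih =>
      intro hz
      apply ih
      obtain ⟨w, hw, hφw⟩ := hz
      have he : (boxProdFam Z).Adj (Function.update u0 j z) (Function.update u0 j c) :=
        adj_upd_upd h
      rcases side_or φ he with ⟨-, hside⟩ | ⟨-, hside⟩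
      · exact ⟨w, hw, by rw [hφw, hside]⟩
      · -- B-side edge: transport it to the `A`-coordinate of `w`
        obtain ⟨Wa⟩ := hconnA (φ (Function.update u0 j z)).1 (φ w).1
        obtain ⟨w₁, w₁', hadj, hj1, hφ1, hφ1'⟩ := transportB φ Wa
          (b := (φ (Function.update u0 j z)).2) (b' := (φ (Function.update u0 j c)).2)
          (Function.update u0 j z) (Function.update u0 j c) j he
          (by simpa using h.ne) Prod.mk.eta.symm (Prod.ext hside.symm rfl)
        have hww₁ : w₁ = w := by
          apply EquivLike.injective φ
          rw [hφ1, hφw]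
        subst hww₁
        refine ⟨w₁', ?_, ?_⟩
        · intro m hm
          have := (coord_spec hadj hj1).2 m hm
          rw [← this]
          exact hw m hm
        · rw [hφ1', hφw]
      done
  obtain ⟨W⟩ := hZc j x y
  exact aux W ⟨Function.update u0 j x, fun m hm => Function.update_of_ne hm _ _, by
    exact Prod.mk.eta.symm⟩

/-- Within one layer in coordinate `j`, all edges lie on the same side. -/
lemma layer_pure (hprime : (Z j).IsPrimeGraph) (hconnA : GA.Preconnected)
    (hZc : ∀ j, (Z j).Preconnected) (u0 : ∀ j, X j) :
    (∀ x y, (Z j).Adj x y →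
        (φ (Function.update u0 j x)).2 = (φ (Function.update u0 j y)).2) ∨
    (∀ x y, (Z j).Adj x y →
        (φ (Function.update u0 j x)).1 = (φ (Function.update u0 j y)).1) := by
  classical
  have hinj : ∀ x y : X j, (φ (Function.update u0 j x)).1 = (φ (Function.update u0 j y)).1 →
      (φ (Function.update u0 j x)).2 = (φ (Function.update u0 j y)).2 → x = y := by
    intro x y h1 h2
    have h4 := EquivLike.injective φ (Prod.ext h1 h2)
    have := congrFun h4 j
    simpa using this
  let f : X j → (Set.range (fun x : X j => (φ (Function.update u0 j x)).1)) ×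
      (Set.range (fun x : X j => (φ (Function.update u0 j x)).2)) :=
    fun x => (⟨(φ (Function.update u0 j x)).1, x, rfl⟩, ⟨(φ (Function.update u0 j x)).2, x, rfl⟩)
  have hbij : Function.Bijective f := by
    constructor
    · intro x y h
      rw [Prod.ext_iff] at h
      exact hinj x y (congrArg Subtype.val h.1) (congrArg Subtype.val h.2)
    · rintro ⟨⟨a, x, rfl⟩, ⟨b, y, rfl⟩⟩
      obtain ⟨w, hw, hφw⟩ := layer_fill φ hconnA hZc u0 j x y
      have hwupd : Function.update u0 j (w j) = w := by
        funext m
        rcases eq_or_ne m j with rfl | hm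
        · simp
        · rw [Function.update_of_ne hm]; exact (hw m hm).symm
      refine ⟨w j, ?_⟩
      have h1 : (φ (Function.update u0 j (w j))).1 = (φ (Function.update u0 j x)).1 := by
        rw [hwupd, hφw]
      have h2 : (φ (Function.update u0 j (w j))).2 = (φ (Function.update u0 j y)).2 := by
        rw [hwupd, hφw]
      exact Prod.ext (Subtype.ext h1) (Subtype.ext h2)
  let ψ : (Z j) ≃g (GA.comap (Subtype.val :
        (Set.range (fun x : X j => (φ (Function.update u0 j x)).1)) → A)).boxProd
      (GB.comap (Subtype.val :
        (Set.range (fun x : X j => (φ (Function.update u0 j x)).2)) → B)) :=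
    { toEquiv := Equiv.ofBijective f hbij
      map_rel_iff' := by
        intro x y
        rw [boxProd_adj]
        constructor
        · rintro (⟨ha, hb⟩ | ⟨hb, ha⟩)
          · have hb' := congrArg Subtype.val hb
            apply zadj_of_adj_upd (u0 := u0) (j := j)
            apply φ.map_rel_iff.mp
            rw [boxProd_adj]
            exact Or.inl ⟨ha, hb'⟩
          · have ha' := congrArg Subtype.val ha
            apply zadj_of_adj_upd (u0 := u0) (j := j)
            apply φ.map_rel_iff.mp
            rw [boxProd_adj]
            exact Or.inr ⟨hb, ha'⟩
        · intro h
          have h2 := φ.map_rel_iff.mpr (adj_upd_upd (u0 := u0) h)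
          rw [boxProd_adj] at h2
          rcases h2 with ⟨ha, hb⟩ | ⟨hb, ha⟩
          · exact Or.inl ⟨ha, Subtype.ext hb⟩
          · exact Or.inr ⟨hb, Subtype.ext ha⟩ }
  rcases hprime.2.2 _ _ ⟨ψ⟩ with ⟨-, hsub⟩ | ⟨-, hsub⟩
  · right
    intro x y _
    exact congrArg Subtype.val (hsub.elim
      (⟨(φ (Function.update u0 j x)).1, x, rfl⟩ :
        Set.range (fun x : X j => (φ (Function.update u0 j x)).1))
      ⟨(φ (Function.update u0 j y)).1, y, rfl⟩)
  · left
    intro x y _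
    exact congrArg Subtype.val (hsub.elim
      (⟨(φ (Function.update u0 j x)).2, x, rfl⟩ :
        Set.range (fun x : X j => (φ (Function.update u0 j x)).2))
      ⟨(φ (Function.update u0 j y)).2, y, rfl⟩)

lemma eq_update_of_adj {u v : ∀ j, X j} {j : J} (huv : (boxProdFam Z).Adj u v)
    (hj : u j ≠ v j) : v = Function.update u j (v j) := by
  funext m
  rcases eq_or_ne m j with rfl | hm
  · simp
  · rw [Function.update_of_ne hm]
    exact ((coord_spec huv hj).2 m hm).symm

/-- Two `j`-edges at a common vertex lie on the same side. -/
lemma same_layer_iff (hprime : (Z j).IsPrimeGraph) (hconnA : GA.Preconnected)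
    (hZc : ∀ j, (Z j).Preconnected) {u v w : ∀ j, X j}
    (huv : (boxProdFam Z).Adj u v) (hjv : u j ≠ v j)
    (huw : (boxProdFam Z).Adj u w) (hjw : u j ≠ w j) :
    ((φ u).2 = (φ v).2 ↔ (φ u).2 = (φ w).2) := by
  have hv := eq_update_of_adj huv hjv
  have hw := eq_update_of_adj huw hjw
  rcases layer_pure φ hprime hconnA hZc u with hp | hp
  · have s1 : (φ u).2 = (φ v).2 := by
      have := hp (u j) (v j) (coord_spec huv hjv).1
      rwa [Function.update_eq_self, ← hv] at this
    have s2 : (φ u).2 = (φ w).2 := by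
      have := hp (u j) (w j) (coord_spec huw hjw).1
      rwa [Function.update_eq_self, ← hw] at this
    exact iff_of_true s1 s2
  · have f1 : (φ u).1 = (φ v).1 := by
      have := hp (u j) (v j) (coord_spec huv hjv).1
      rwa [Function.update_eq_self, ← hv] at this
    have f2 : (φ u).1 = (φ w).1 := by
      have := hp (u j) (w j) (coord_spec huw hjw).1
      rwa [Function.update_eq_self, ← hw] at this
    exact iff_of_false (not_both φ huv f1) (not_both φ huw f2)

/-- A `j`-edge can be transported to any vertex, preserving its side. -/
lemma propagate (hprime : ∀ j, (Z j).IsPrimeGraph) (hconnA : GA.Preconnected)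
    (hZc : ∀ j, (Z j).Preconnected) {j : J} {u w : ∀ j, X j}
    (W : (boxProdFam Z).Walk u w) :
    ∀ {v}, (boxProdFam Z).Adj u v → u j ≠ v j →
      ∃ w', (boxProdFam Z).Adj w w' ∧ w j ≠ w' j ∧
        ((φ u).2 = (φ v).2 ↔ (φ w).2 = (φ w').2) := by
  induction W with
  | nil => exact fun huv hj => ⟨_, huv, hj, Iff.rfl⟩
  | @cons u u₁ w h p ih =>
    intro v huv hj
    by_cases hstep : u₁ j = u j
    · obtain ⟨x, h1, h2, h3⟩ := transport_step φ huv hj h hstep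
      obtain ⟨w', hw1, hw2, hw3⟩ := ih h1 h2
      exact ⟨w', hw1, hw2, h3.trans hw3⟩
    · have hj1 : u j ≠ u₁ j := fun hh => hstep hh.symm
      have hiff := same_layer_iff φ (hprime j) hconnA hZc huv hj h hj1
      obtain ⟨w', hw1, hw2, hw3⟩ := ih h.symm (fun hh => hstep hh)
      exact ⟨w', hw1, hw2, (hiff.trans eq_comm).trans hw3⟩

/-- The coordinate of an edge determines its side. -/
lemma coord_side (hprime : ∀ j, (Z j).IsPrimeGraph)
    (hconn : (boxProdFam Z).Preconnected) (hconnA : GA.Preconnected)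
    (hZc : ∀ j, (Z j).Preconnected) (j : J) :
    (∀ u v, (boxProdFam Z).Adj u v → u j ≠ v j → (φ u).2 = (φ v).2) ∨
    (∀ u v, (boxProdFam Z).Adj u v → u j ≠ v j → (φ u).1 = (φ v).1) := by
  by_cases hall : ∀ u v, (boxProdFam Z).Adj u v → u j ≠ v j → (φ u).2 = (φ v).2
  · exact Or.inl hall
  · right
    push_neg at hall
    obtain ⟨u, v, huv, hj, hns⟩ := hall
    intro u' v' h' hj'
    obtain ⟨W⟩ := hconn u u'
    obtain ⟨w', hw1, hw2, hw3⟩ := propagate φ hprime hconnA hZc W huv hj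
    have hnw : ¬ (φ u').2 = (φ w').2 := fun hh => hns (hw3.mpr hh)
    have hiff := same_layer_iff φ (hprime j) hconnA hZc hw1 hw2 h' hj'
    have hnv : ¬ (φ u').2 = (φ v').2 := fun hh => hnw (hiff.mpr hh)
    rcases side_or φ h' with ⟨-, hb⟩ | ⟨-, ha⟩
    · exact absurd hb hnv
    · exact ha

/-- A function on the vertices of a product that is invariant along edges in
coordinates outside `P` depends only on the `P`-coordinates. -/
lemma const_of_agree [Fintype J] (hZc : ∀ j, (Z j).Preconnected) (P : J → Prop)
    {C : Sort*} (F : (∀ j, X j) → C)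
    (hF : ∀ j, ¬ P j → ∀ u v, (boxProdFam Z).Adj u v → u j ≠ v j → F u = F v) :
    ∀ (n : ℕ) (D : Finset J) (x y : ∀ j, X j), D.card ≤ n →
      (∀ j, j ∉ D → x j = y j) →
      (∀ j, P j → x j = y j) → F x = F y := by
  classical
  intro n
  induction n with
  | zero =>
    intro D x y hcard hout _
    have hxy : x = y := by
      funext m
      apply hout
      rw [Finset.card_eq_zero.mp (Nat.le_zero.mp hcard)]
      exact Finset.notMem_empty m
    rw [hxy]
  | succ n ih =>
    intro D x y hcard hout hagree
    rcases eq_or_ne x y with rfl | hxy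
    · rfl
    obtain ⟨j, hj⟩ := Function.ne_iff.mp hxy
    have hjD : j ∈ D := by
      by_contra hc
      exact hj (hout j hc)
    have hPj : ¬ P j := fun hp => hj (hagree j hp)
    have hstep : ∀ {a b : X j} (_ : (Z j).Walk a b) (u : ∀ m, X m), u j = a →
        F u = F (Function.update u j b) := by
      intro a b W
      induction W with
      | nil =>
        intro u hu
        rw [← hu, Function.update_eq_self]
      | @cons a c b hzc p ih2 =>
        intro u hu
        have e : (boxProdFam Z).Adj u (Function.update u j c) :=
          adj_update (by rw [hu]; exact hzc)
        have hne : u j ≠ Function.update u j c j := by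
          rw [Function.update_self, hu]; exact hzc.ne
        have h1 : F u = F (Function.update u j c) := hF j hPj u _ e hne
        have h2 := ih2 (Function.update u j c) (Function.update_self j c u)
        rw [Function.update_idem] at h2
        rw [h1, h2]
    have hstep' : F x = F (Function.update x j (y j)) :=
      hstep (hZc j (x j) (y j)).some x rfl
    rw [hstep']
    apply ih (D.erase j)
    · have := Finset.card_erase_of_mem hjD
      omega
    · intro m hm
      rcases eq_or_ne m j with rfl | hmj
      · simp
      · rw [Function.update_of_ne hmj]
        apply hout
        intro hc
        exact hm (Finset.mem_erase.mpr ⟨hmj, hc⟩)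
    · intro m hm
      rcases eq_or_ne m j with rfl | hmj
      · simp
      · rw [Function.update_of_ne hmj]
        exact hagree m hm

/-- The splitting lemma: a two-factor decomposition of a product of prime graphs
splits the index set. -/
theorem split [Fintype J] (hprime : ∀ j, (Z j).IsPrimeGraph)
    (φ : boxProdFam Z ≃g GA.boxProd GB) :
    ∃ s : J → Bool,
      Nonempty (GA ≃g boxProdFam (fun j : {j // s j = true} => Z (j.1))) ∧
      Nonempty (GB ≃g boxProdFam (fun j : {j // s j = false} => Z (j.1))) := by
  classical
  have hZc : ∀ j, (Z j).Preconnected := fun j => (hprime j).1.preconnected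
  have hXne : ∀ j, Nonempty (X j) := fun j => (hprime j).1.nonempty
  have hXconn : (boxProdFam Z).Connected :=
    boxProdFam_connected (fun j => (hprime j).1) hXne
  have hAB : (GA.boxProd GB).Connected := (φ.connected_iff).mp hXconn
  obtain ⟨hGAc, hGBc⟩ := connected_boxProd.mp hAB
  set s : J → Bool := fun j =>
    if (∀ u v, (boxProdFam Z).Adj u v → u j ≠ v j → (φ u).2 = (φ v).2) then true
    else false with hs
  have hsT : ∀ j, s j = true →
      ∀ u v, (boxProdFam Z).Adj u v → u j ≠ v j → (φ u).2 = (φ v).2 := by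
    intro j h
    by_cases hc : ∀ u v, (boxProdFam Z).Adj u v → u j ≠ v j → (φ u).2 = (φ v).2
    · exact hc
    · rw [hs] at h
      simp only [if_neg hc] at h
      exact absurd h (by simp)
  have hsF : ∀ j, s j = false →
      ∀ u v, (boxProdFam Z).Adj u v → u j ≠ v j → (φ u).1 = (φ v).1 := by
    intro j h
    rcases coord_side φ hprime hXconn.preconnected hGAc.preconnected hZc j with hc | hc
    · rw [hs] at h
      simp only [if_pos hc] at h
      exact absurd h (by simp)
    · exact hc
  refine ⟨s, ?_⟩
  set mg : (∀ j : {j // s j = true}, X j.1) → (∀ j : {j // s j = false}, X j.1) → ∀ j, X j :=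
    fun t r j => if h : s j = true then t ⟨j, h⟩ else r ⟨j, Bool.eq_false_iff.mpr h⟩ with hmg
  have r0 : ∀ j : {j // s j = false}, X j.1 := fun j => (hXne j.1).some
  have t0 : ∀ j : {j // s j = true}, X j.1 := fun j => (hXne j.1).some
  have mg_true : ∀ t r j (h : s j = true), mg t r j = t ⟨j, h⟩ := by
    intro t r j h; rw [hmg]; exact dif_pos h
  have mg_false : ∀ t r j (h : s j = false), mg t r j = r ⟨j, h⟩ := by
    intro t r j h
    rw [hmg]
    have h' : ¬ s j = true := by simp [h]
    simp only [dif_neg h']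
  have F0A : ∀ t r r', (φ (mg t r)).1 = (φ (mg t r')).1 := by
    intro t r r'
    apply const_of_agree hZc (fun j => s j = true) (fun u => (φ u).1) ?_ (Fintype.card J)
      Finset.univ _ _ (le_of_eq Finset.card_univ) (fun j hj => absurd (Finset.mem_univ j) hj)
    · intro j hj
      rw [mg_true t r j hj, mg_true t r' j hj]
    · intro j hnp u v ha hne
      have hf : s j = false := by
        cases hsj : s j
        · rfl
        · exact absurd hsj hnp
      exact hsF j hf u v ha hne
  have F0B : ∀ t t' r, (φ (mg t r)).2 = (φ (mg t' r)).2 := by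
    intro t t' r
    apply const_of_agree hZc (fun j => s j = false) (fun u => (φ u).2) ?_ (Fintype.card J)
      Finset.univ _ _ (le_of_eq Finset.card_univ) (fun j hj => absurd (Finset.mem_univ j) hj)
    · intro j hj
      rw [mg_false t r j hj, mg_false t' r j hj]
    · intro j hnp u v ha hne
      have hf : s j = true := by
        cases hsj : s j
        · exact absurd hsj hnp
        · rfl
      exact hsT j hf u v ha hne
  set g : (∀ j : {j // s j = true}, X j.1) → A := fun t => (φ (mg t r0)).1 with hg
  set h : (∀ j : {j // s j = false}, X j.1) → B := fun r => (φ (mg t0 r)).2 with hh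
  have key : ∀ t r, φ (mg t r) = (g t, h r) := by
    intro t r
    exact Prod.ext (F0A t r r0) (F0B t t0 r)
  have hsplitmg : ∀ x : ∀ j, X j, mg (fun j => x j.1) (fun j => x j.1) = x := by
    intro x
    funext j
    rw [hmg]
    by_cases hsj : s j = true
    · simp only [dif_pos hsj]
    · simp only [dif_neg hsj]
  have hgbij : Function.Bijective g := by
    constructor
    · intro t t' ht
      have h1 : φ (mg t r0) = φ (mg t' r0) := by
        rw [key, key, ht]
      have h2 := EquivLike.injective φ h1
      funext j
      have := congrFun h2 j.1
      rw [mg_true t r0 j.1 j.2, mg_true t' r0 j.1 j.2] at this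
      exact this
    · intro a
      set x := φ.symm (a, h r0) with hx
      refine ⟨fun j => x j.1, ?_⟩
      have h1 : φ x = (a, h r0) := φ.apply_symm_apply _
      have h2 : φ x = (g (fun j => x j.1), h (fun j => x j.1)) := by
        rw [← key (fun j => x j.1) (fun j => x j.1), hsplitmg]
      rw [h1] at h2
      exact (congrArg Prod.fst h2).symm
  have hhbij : Function.Bijective h := by
    constructor
    · intro r r' hr
      have h1 : φ (mg t0 r) = φ (mg t0 r') := by
        rw [key, key, hr]
      have h2 := EquivLike.injective φ h1
      funext j
      have := congrFun h2 j.1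
      rw [mg_false t0 r j.1 j.2, mg_false t0 r' j.1 j.2] at this
      exact this
    · intro b
      set x := φ.symm (g t0, b) with hx
      refine ⟨fun j => x j.1, ?_⟩
      have h1 : φ x = (g t0, b) := φ.apply_symm_apply _
      have h2 : φ x = (g (fun j => x j.1), h (fun j => x j.1)) := by
        rw [← key (fun j => x j.1) (fun j => x j.1), hsplitmg]
      rw [h1] at h2
      exact (congrArg Prod.snd h2).symm
  constructor
  · -- GA
    refine ⟨(RelIso.mk (Equiv.ofBijective g hgbij) ?_).symm⟩
    intro t t'
    show GA.Adj (g t) (g t') ↔ (boxProdFam _).Adj t t'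
    constructor
    · intro hadj
      have h1 : (GA.boxProd GB).Adj (φ (mg t r0)) (φ (mg t' r0)) := by
        rw [key, key]
        exact Or.inl ⟨hadj, rfl⟩
      have h2 := φ.map_rel_iff.mp h1
      obtain ⟨κ, hκ, he⟩ := h2
      have hsκ : s κ = true := by
        by_contra hc
        have hf : s κ = false := Bool.eq_false_iff.mpr hc
        apply hκ.ne
        rw [mg_false t r0 κ hf, mg_false t' r0 κ hf]
      refine ⟨⟨κ, hsκ⟩, ?_, ?_⟩
      · have e1 := mg_true t r0 κ hsκ
        have e2 := mg_true t' r0 κ hsκ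
        rw [e1, e2] at hκ
        exact hκ
      · intro i hi
        have hvne : i.1 ≠ κ := fun hc => hi (Subtype.ext hc)
        have := he i.1 hvne
        rw [mg_true t r0 i.1 i.2, mg_true t' r0 i.1 i.2] at this
        exact this
    · rintro ⟨κ, hκ, he⟩
      have hadjX : (boxProdFam Z).Adj (mg t r0) (mg t' r0) := by
        refine ⟨κ.1, ?_, ?_⟩
        · rw [mg_true t r0 κ.1 κ.2, mg_true t' r0 κ.1 κ.2]
          exact hκ
        · intro i hi
          by_cases hsi : s i = true
          · rw [mg_true t r0 i hsi, mg_true t' r0 i hsi]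
            exact he ⟨i, hsi⟩ (fun hc => hi (congrArg Subtype.val hc))
          · have hf : s i = false := Bool.eq_false_iff.mpr hsi
            rw [mg_false t r0 i hf, mg_false t' r0 i hf]
      have h1 := φ.map_rel_iff.mpr hadjX
      rw [key, key] at h1
      rcases h1 with ⟨ha, -⟩ | ⟨hb, -⟩
      · exact ha
      · exact absurd rfl hb.ne
  · -- GB
    refine ⟨(RelIso.mk (Equiv.ofBijective h hhbij) ?_).symm⟩
    intro r r'
    show GB.Adj (h r) (h r') ↔ (boxProdFam _).Adj r r'
    constructor
    · intro hadj
      have h1 : (GA.boxProd GB).Adj (φ (mg t0 r)) (φ (mg t0 r')) := by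
        rw [key, key]
        exact Or.inr ⟨hadj, rfl⟩
      have h2 := φ.map_rel_iff.mp h1
      obtain ⟨κ, hκ, he⟩ := h2
      have hsκ : s κ = false := by
        by_contra hc
        have hf : s κ = true := by
          cases hsj : s κ
          · exact absurd hsj hc
          · rfl
        apply hκ.ne
        rw [mg_true t0 r κ hf, mg_true t0 r' κ hf]
      refine ⟨⟨κ, hsκ⟩, ?_, ?_⟩
      · have e1 := mg_false t0 r κ hsκ
        have e2 := mg_false t0 r' κ hsκ
        rw [e1, e2] at hκ
        exact hκ
      · intro i hi
        have hvne : i.1 ≠ κ := fun hc => hi (Subtype.ext hc)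
        have := he i.1 hvne
        rw [mg_false t0 r i.1 i.2, mg_false t0 r' i.1 i.2] at this
        exact this
    · rintro ⟨κ, hκ, he⟩
      have hadjX : (boxProdFam Z).Adj (mg t0 r) (mg t0 r') := by
        refine ⟨κ.1, ?_, ?_⟩
        · rw [mg_false t0 r κ.1 κ.2, mg_false t0 r' κ.1 κ.2]
          exact hκ
        · intro i hi
          by_cases hsi : s i = false
          · rw [mg_false t0 r i hsi, mg_false t0 r' i hsi]
            exact he ⟨i, hsi⟩ (fun hc => hi (congrArg Subtype.val hc))
          · have hf : s i = true := by
              cases hsj : s i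
              · exact absurd hsj hsi
              · rfl
            rw [mg_true t0 r i hf, mg_true t0 r' i hf]
      have h1 := φ.map_rel_iff.mpr hadjX
      rw [key, key] at h1
      rcases h1 with ⟨ha, -⟩ | ⟨hb, -⟩
      · exact absurd rfl ha.ne
      · exact hb

end Split

section Assemble

/-- Reindexing a box product of a family along an equivalence of index types. -/
def boxProdFamCongrLeft {J1 J2 : Type u} (e : J1 ≃ J2) {X2 : J2 → Type u}
    (Z2 : ∀ j, SimpleGraph (X2 j)) :
    boxProdFam (fun j => Z2 (e j)) ≃g boxProdFam Z2 where
  toEquiv := Equiv.piCongrLeft X2 e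
  map_rel_iff' := by
    intro x y
    constructor
    · rintro ⟨κ2, hκ, he⟩
      obtain ⟨κ1, rfl⟩ := e.surjective κ2
      rw [Equiv.piCongrLeft_apply_apply, Equiv.piCongrLeft_apply_apply] at hκ
      refine ⟨κ1, hκ, ?_⟩
      intro i hi
      have h2 := he (e i) (fun hc => hi (e.injective hc))
      rw [Equiv.piCongrLeft_apply_apply, Equiv.piCongrLeft_apply_apply] at h2
      exact h2
    · rintro ⟨κ1, hκ, he⟩
      refine ⟨e κ1, ?_, ?_⟩
      · rw [Equiv.piCongrLeft_apply_apply, Equiv.piCongrLeft_apply_apply]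
        exact hκ
      · intro i hi
        obtain ⟨i1, rfl⟩ := e.surjective i
        rw [Equiv.piCongrLeft_apply_apply, Equiv.piCongrLeft_apply_apply]
        exact he i1 (fun hc => hi (congrArg e hc))

/-- Splitting off the first factor of a finite box product family. -/
def consIso {k : ℕ} {W : Fin (k+1) → Type u} (H : ∀ i, SimpleGraph (W i)) :
    boxProdFam H ≃g (H 0).boxProd (boxProdFam (fun i : Fin k => H i.succ)) where
  toFun x := (x 0, fun i => x i.succ)
  invFun p := Fin.cons p.1 p.2
  left_inv x := by
    funext i
    refine Fin.cases ?_ ?_ i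
    · simp
    · intro i'; simp
  right_inv p := by
    obtain ⟨a, f⟩ := p
    refine Prod.ext ?_ ?_
    · simp
    · funext i; simp
  map_rel_iff' := by
    intro x y
    rw [boxProd_adj]
    constructor
    · rintro (⟨ha, hb⟩ | ⟨hb, ha⟩)
      · refine ⟨0, ha, ?_⟩
        intro i hi
        rcases Fin.eq_zero_or_eq_succ i with rfl | ⟨i', rfl⟩
        · exact absurd rfl hi
        · exact congrFun hb i'
      · obtain ⟨κ, hκ, he⟩ := hb
        refine ⟨κ.succ, hκ, ?_⟩
        intro i hi
        rcases Fin.eq_zero_or_eq_succ i with rfl | ⟨i', rfl⟩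
        · exact ha
        · exact he i' (fun hc => hi (congrArg Fin.succ hc))
    · rintro ⟨κ, hκ, he⟩
      rcases Fin.eq_zero_or_eq_succ κ with rfl | ⟨κ', rfl⟩
      · exact Or.inl ⟨hκ, funext fun i => he i.succ (Fin.succ_ne_zero i)⟩
      · refine Or.inr ⟨⟨κ', hκ, ?_⟩, he 0 (Fin.succ_ne_zero κ').symm⟩
        intro i hi
        exact he i.succ (fun hc => hi (Fin.succ_injective _ hc))

/-- The refinement theorem for simple graphs: a prime factorization refines any
finite factorization. -/
theorem refine_factorization (k : ℕ) :
    ∀ {W : Fin k → Type u} (H : ∀ i, SimpleGraph (W i))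
      (J : Type u) [Fintype J] {X : J → Type u} (Z : ∀ j, SimpleGraph (X j)),
      (∀ j, (Z j).IsPrimeGraph) →
      Nonempty (boxProdFam H ≃g boxProdFam Z) →
      ∃ p : J → Fin k, ∀ i,
        Nonempty (H i ≃g boxProdFam (fun j : {j // p j = i} => Z j.1)) := by
  induction k with
  | zero =>
    intro W H J _ X Z hprime hiso
    obtain ⟨φ⟩ := hiso
    have hJ : IsEmpty J := by
      by_contra hc
      rw [not_isEmpty_iff] at hc
      obtain ⟨j0⟩ := hc
      obtain ⟨x, y, hxy⟩ := (hprime j0).2.1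
      have hXne : ∀ j, Nonempty (X j) := fun j => (hprime j).1.nonempty
      classical
      set u : ∀ j, X j := fun j => (hXne j).some with hu
      have hne : Function.update u j0 x ≠ Function.update u j0 y := by
        intro hc'
        apply hxy
        have := congrFun hc' j0
        simpa using this
      apply hne
      haveI : Subsingleton (∀ i : Fin 0, W i) := ⟨fun a b => funext fun i => i.elim0⟩
      have h1 : φ.toEquiv.symm (Function.update u j0 x) =
          φ.toEquiv.symm (Function.update u j0 y) := Subsingleton.elim _ _
      have h2 := congrArg φ.toEquiv h1
      simpa using h2
    exact ⟨fun j => (hJ.elim j), fun i => i.elim0⟩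
  | succ k ih =>
    intro W H J _ X Z hprime hiso
    classical
    obtain ⟨φ0⟩ := hiso
    have hsplit := split (GA := H 0) (GB := boxProdFam fun i : Fin k => H i.succ)
      hprime (φ0.symm.trans (consIso H))
    obtain ⟨s, ⟨ψA⟩, ⟨ψB⟩⟩ := hsplit
    obtain ⟨p', hp'⟩ := ih (fun i => H i.succ) {j // s j = false}
      (fun j : {j // s j = false} => Z j.1) (fun j => hprime j.1) ⟨ψB⟩
    set p : J → Fin (k+1) := fun j =>
      if hs : s j = false then (p' ⟨j, hs⟩).succ else 0 with hp
    have hp0 : ∀ j, s j = true → p j = 0 := by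
      intro j h
      rw [hp]
      simp only [dif_neg (by simp [h] : ¬ s j = false)]
    have hps : ∀ j (h : s j = false), p j = (p' ⟨j, h⟩).succ := by
      intro j h
      rw [hp]
      simp only [dif_pos h]
    refine ⟨p, ?_⟩
    intro i
    rcases Fin.eq_zero_or_eq_succ i with rfl | ⟨i', rfl⟩
    · have hiff : ∀ a, s a = true ↔ p a = 0 := by
        intro a
        constructor
        · exact hp0 a
        · intro h0
          cases hsa : s a
          · rw [hps a hsa] at h0
            exact absurd h0 (Fin.succ_ne_zero _)
          · rfl
      exact ⟨ψA.trans (boxProdFamCongrLeft (Equiv.subtypeEquivRight hiff)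
        (fun j : {j // p j = 0} => Z j.1))⟩
    · obtain ⟨ψ'⟩ := hp' i'
      have hfalse : ∀ j : {j : J // p j = Fin.succ i'}, s j.1 = false := by
        intro j
        cases hsa : s j.1
        · rfl
        · have := hp0 j.1 hsa
          rw [j.2] at this
          exact absurd this (Fin.succ_ne_zero _)
      have hsucc : ∀ j : {j : J // p j = Fin.succ i'}, p' ⟨j.1, hfalse j⟩ = i' := by
        intro j
        have := hps j.1 (hfalse j)
        rw [j.2] at this
        exact (Fin.succ_injective _ this.symm)
      let e : {j : {j // s j = false} // p' j = i'} ≃ {j : J // p j = Fin.succ i'} :=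
        { toFun := fun j => ⟨j.1.1, by rw [hps j.1.1 j.1.2]; exact congrArg Fin.succ j.2⟩
          invFun := fun j => ⟨⟨j.1, hfalse j⟩, hsucc j⟩
          left_inv := fun j => by
            apply Subtype.ext
            apply Subtype.ext
            rfl
          right_inv := fun j => by
            apply Subtype.ext
            rfl }
      have E : (boxProdFam (fun j : {j : {j // s j = false} // p' j = i'} => Z j.1.1)) ≃g
          boxProdFam (fun j : {j // p j = Fin.succ i'} => Z j.1) :=
        boxProdFamCongrLeft e (fun j : {j // p j = Fin.succ i'} => Z j.1)
      exact ⟨ψ'.trans E⟩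

end Assemble

section Digraphs

/-- An isomorphism of digraphs induces an isomorphism of shadows. -/
def shadowIso {α β : Type*} {G : Digraph α} {H : Digraph β} (f : G.Iso H) :
    G.shadow ≃g H.shadow where
  toEquiv := f.toEquiv
  map_rel_iff' := by
    intro a b
    show H.shadow.Adj (f a) (f b) ↔ G.shadow.Adj a b
    constructor
    · rintro ⟨hne, h | h⟩
      · exact ⟨fun hc => hne (congrArg f hc), Or.inl (f.map_rel_iff.mp h)⟩
      · exact ⟨fun hc => hne (congrArg f hc), Or.inr (f.map_rel_iff.mp h)⟩
    · rintro ⟨hne, h | h⟩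
      · exact ⟨fun hc => hne (EquivLike.injective f hc), Or.inl (f.map_rel_iff.mpr h)⟩
      · exact ⟨fun hc => hne (EquivLike.injective f hc), Or.inr (f.map_rel_iff.mpr h)⟩

/-- The shadow of a product of loopless digraphs is the box product of the shadows. -/
lemma shadow_prodFam {I : Type*} {V : I → Type*} (Gs : ∀ i, Digraph (V i))
    (hl : ∀ i v, ¬ (Gs i).Adj v v) :
    (Digraph.prodFam Gs).shadow = boxProdFam (fun i => (Gs i).shadow) := by
  ext u v
  constructor
  · rintro ⟨hne, h | h⟩
    · obtain ⟨κ, hκ, he⟩ := h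
      exact ⟨κ, ⟨fun hc => hl κ _ (hc ▸ hκ), Or.inl hκ⟩, he⟩
    · obtain ⟨κ, hκ, he⟩ := h
      exact ⟨κ, ⟨fun hc => hl κ _ (hc ▸ hκ), Or.inr hκ⟩, fun i hi => (he i hi).symm⟩
  · rintro ⟨κ, ⟨hne, h⟩, he⟩
    refine ⟨fun hc => hne (congrFun hc κ), ?_⟩
    rcases h with h | h
    · exact Or.inl ⟨κ, h, he⟩
    · exact Or.inr ⟨κ, h, fun i hi => (he i hi).symm⟩

def isoOfGraphEq {α : Type*} {G H : SimpleGraph α} (h : G = H) : G ≃g H := by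
  subst h
  exact ⟨Equiv.refl α, Iff.rfl⟩


end Digraphs

end ShadowRefine

/-- The prime factorization of the shadow of a finite connected loopless digraph refines
the prime factorization of the digraph: the prime factors of the shadow can be
partitioned (as fibers of a map `p : J → Fin k`) so that the shadow of each prime digraph
factor is the box product of the simple prime factors in the corresponding class. -/
theorem shadow_factorization_refines {V : Type u} [Fintype V] (G : Digraph V)
    (hconn : G.Connected) (hloopless : ∀ v, ¬ G.Adj v v) (hnt : Nontrivial V)
    {k : ℕ} {W : Fin k → Type u} (Gs : ∀ i, Digraph (W i))
    (hGs : ∀ i, (Gs i).IsPrimeLoopless)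
    (hG : Nonempty (G.Iso (Digraph.prodFam Gs)))
    {J : Type u} [Fintype J] {X : J → Type u} (Z : ∀ j, SimpleGraph (X j))
    (hZ : ∀ j, (Z j).IsPrimeGraph)
    (hS : Nonempty (G.shadow ≃g SimpleGraph.boxProdFam Z)) :
    ∃ p : J → Fin k, ∀ i,
      Nonempty ((Gs i).shadow ≃g
        SimpleGraph.boxProdFam (fun j : {j // p j = i} => Z j.1)) := by
  obtain ⟨φG⟩ := hG
  obtain ⟨φS⟩ := hS
  have hloop : ∀ i v, ¬ (Gs i).Adj v v := fun i => (hGs i).2.2.1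
  have h1 : G.shadow ≃g SimpleGraph.boxProdFam (fun i => (Gs i).shadow) :=
    (ShadowRefine.shadowIso φG).trans
      (ShadowRefine.isoOfGraphEq (ShadowRefine.shadow_prodFam Gs hloop))
  exact ShadowRefine.refine_factorization k (fun i => (Gs i).shadow) J Z hZ
    ⟨h1.symm.trans φS⟩
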